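/- Decomposition Law: assume bounded rewards |R_i| ≤ C on the countable belief state space Ω(ω₀), flow-balance constraints on the occupation measures x_i^a(π, ω_j), and define A_i^Ω = 1 + β∑_k (p_{ik}^1 − p_{ik}^0) T_k^{Ω^c} and W_i^Ω = R_i + β∑_k (p_{ik}^1 − p_{ik}^0) R_k^{Ω^c}. Then for any policy π, initial state ω_j, and subset Ω: T_j^π + ∑_{i∈Ω^c} A_i^Ω x_i^0(π, ω_j) = T_j^{Ω^c} + ∑_{i∈Ω} A_i^Ω x_i^1(π, ω_j). -/

import Mathlib

/-- Row sum `∑_k p_{ik} T_k`. -/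
private noncomputable def Srow {S : Type*} (p : S → S → ℝ) (T : S → ℝ) (i : S) : ℝ := ∑' k, p i k * T k

private lemma srow_summable {S : Type*} {p : S → S → ℝ} {T : S → ℝ} {M : ℝ}
    (hpnn : ∀ i j, 0 ≤ p i j) (hp : ∀ i, HasSum (p i) 1) (hT : ∀ i, |T i| ≤ M) (i : S) :
    Summable (fun k => p i k * T k) := by
  refine Summable.of_abs (Summable.of_nonneg_of_le (fun k => abs_nonneg _) (fun k => ?_)
    (((hp i).summable).mul_right M))
  rw [abs_mul, abs_of_nonneg (hpnn i k)]
  exact mul_le_mul_of_nonneg_left (hT k) (hpnn i k)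

private lemma srow_bound {S : Type*} {p : S → S → ℝ} {T : S → ℝ} {M : ℝ}
    (hpnn : ∀ i j, 0 ≤ p i j) (hp : ∀ i, HasSum (p i) 1) (hT : ∀ i, |T i| ≤ M) (i : S) :
    |Srow p T i| ≤ M := by
  have habs : Summable (fun k => |p i k| * |T k|) := by
    refine Summable.of_nonneg_of_le (fun k => mul_nonneg (abs_nonneg _) (abs_nonneg _))
      (fun k => ?_) (((hp i).summable).mul_right M)
    rw [abs_of_nonneg (hpnn i k)]
    exact mul_le_mul_of_nonneg_left (hT k) (hpnn i k)
  calc |Srow p T i| = ‖∑' k, p i k * T k‖ := rfl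
    _ ≤ ∑' k, ‖p i k * T k‖ := norm_tsum_le_tsum_norm
        (by simpa [Real.norm_eq_abs, abs_mul] using habs)
    _ = ∑' k, |p i k| * |T k| := by simp [Real.norm_eq_abs, abs_mul]
    _ ≤ ∑' k, p i k * M := by
        refine Summable.tsum_le_tsum (fun k => ?_) habs (((hp i).summable).mul_right M)
        rw [abs_of_nonneg (hpnn i k)]
        exact mul_le_mul_of_nonneg_left (hT k) (hpnn i k)
    _ = M := by rw [tsum_mul_right, (hp i).tsum_eq, one_mul]

/-- Fubini-type swap: `∑_i T_i ∑_j p_{ji} x_j = ∑_j x_j ∑_i p_{ji} T_i`. -/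
private lemma swapKey {S : Type*} (p : S → S → ℝ) (x T : S → ℝ) (M : ℝ)
    (hpnn : ∀ i j, 0 ≤ p i j) (hp : ∀ i, HasSum (p i) 1)
    (hxnn : ∀ i, 0 ≤ x i) (hxs : Summable x)
    (hT : ∀ i, |T i| ≤ M) :
    HasSum (fun i => T i * ∑' j, p j i * x j) (∑' j, x j * Srow p T j) := by
  have hple : ∀ j i, p j i ≤ 1 := fun j i => by
    have := le_hasSum (hp j) i (fun k _ => hpnn j k); simpa using this
  set F : S × S → ℝ := fun ji => T ji.2 * (p ji.1 ji.2 * x ji.1) with hFdef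
  have hG : Summable (fun ji : S × S => p ji.1 ji.2 * x ji.1) := by
    rw [summable_prod_of_nonneg (fun ji => mul_nonneg (hpnn _ _) (hxnn _))]
    refine ⟨fun j => ((hp j).summable).mul_right (x j), ?_⟩
    refine hxs.congr fun j => ?_
    show x j = ∑' (y : S), p j y * x j
    rw [tsum_mul_right, (hp j).tsum_eq, one_mul]
  have hF : Summable F := by
    refine Summable.of_abs (Summable.of_nonneg_of_le (fun _ => abs_nonneg _) (fun ji => ?_)
      (hG.mul_left M))
    have hnn : 0 ≤ p ji.1 ji.2 * x ji.1 := mul_nonneg (hpnn _ _) (hxnn _)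
    show |T ji.2 * (p ji.1 ji.2 * x ji.1)| ≤ M * (p ji.1 ji.2 * x ji.1)
    rw [abs_mul, abs_of_nonneg hnn]
    exact mul_le_mul_of_nonneg_right (hT _) hnn
  have hfib1 : ∀ j, HasSum (fun i => F (j, i)) (x j * Srow p T j) := by
    intro j
    have h2 := ((srow_summable hpnn hp hT j).hasSum).mul_left (x j)
    have hfe : (fun i => F (j, i)) = fun i => x j * (p j i * T i) := funext fun i => by
      show T i * (p j i * x j) = x j * (p j i * T i); ring
    rw [hfe]; exact h2
  have hQs : ∀ i, Summable (fun j => p j i * x j) := by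
    intro i
    refine Summable.of_nonneg_of_le (fun j => mul_nonneg (hpnn _ _) (hxnn _)) (fun j => ?_) hxs
    exact mul_le_of_le_one_left (hxnn j) (hple j i)
  have hF' : Summable (fun ji : S × S => F ji.swap) := hF.prod_symm
  have hfib2 : ∀ i, HasSum (fun j => F (i, j).swap) (T i * ∑' j, p j i * x j) := by
    intro i
    have h2 := ((hQs i).hasSum).mul_left (T i)
    have hfe : (fun j => F (i, j).swap) = fun j => T i * (p j i * x j) := funext fun j => rfl
    rw [hfe]; exact h2
  have hsum1 : HasSum (fun j => x j * Srow p T j) (∑' ji, F ji) :=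
    HasSum.prod_fiberwise hF.hasSum hfib1
  have hsum2 : HasSum (fun i => T i * ∑' j, p j i * x j) (∑' ji : S × S, F ji.swap) :=
    HasSum.prod_fiberwise hF'.hasSum hfib2
  have hswap : ∑' (ji : S × S), F ji.swap = ∑' ji, F ji := (Equiv.prodComm S S).tsum_eq F
  have : (∑' ji : S × S, F ji.swap) = ∑' j, x j * Srow p T j := hswap.trans hsum1.tsum_eq.symm
  exact this ▸ hsum2

/-- Decomposition Law, Theorem 3.1, time part: on the countable
belief state space with bounded rewards `|R_i| ≤ C`, probability kernels
`p¹, p⁰`, occupation measures `x¹, x⁰` of a policy π started at `ω_j`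
satisfying the flow-balance constraints, the Ω^c-priority discounted active
times `T^{Ω^c}`, and
`A_i^Ω = 1 + β ∑_k (p¹_{ik} - p⁰_{ik}) T_k^{Ω^c}`, we have
`T_j^π + ∑_{i ∈ Ω^c} A_i^Ω x_i^0 = T_j^{Ω^c} + ∑_{i ∈ Ω} A_i^Ω x_i^1`,
where `T_j^π = ∑_i x_i^1`. -/
theorem stmt18 {S : Type*} [Countable S] [DecidableEq S]
    (β C : ℝ) (hβ0 : 0 ≤ β) (hβ1 : β < 1)
    (R : S → ℝ) (hR : ∀ i, |R i| ≤ C)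
    (p1 p0 : S → S → ℝ)
    (hp1nn : ∀ i j, 0 ≤ p1 i j) (hp0nn : ∀ i j, 0 ≤ p0 i j)
    (hp1 : ∀ i, HasSum (p1 i) 1) (hp0 : ∀ i, HasSum (p0 i) 1)
    (Ω : Set S) (j0 : S)
    -- occupation measures of the policy π started at j0
    (x1 x0 : S → ℝ)
    (hx1nn : ∀ i, 0 ≤ x1 i) (hx0nn : ∀ i, 0 ≤ x0 i)
    (hbal : ∀ i, x1 i + x0 i = (if i = j0 then (1 : ℝ) else 0)
      + β * ∑' j, p1 j i * x1 j + β * ∑' j, p0 j i * x0 j)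
    (hxsum : HasSum (fun i => x1 i + x0 i) (1 / (1 - β)))
    -- expected discounted active time of the Ω^c-priority policy
    (TOc : S → ℝ)
    (hTdp1 : ∀ i ∈ Ωᶜ, TOc i = 1 + β * ∑' j, p1 i j * TOc j)
    (hTdp0 : ∀ i ∈ Ω, TOc i = β * ∑' j, p0 i j * TOc j)
    (hTbd : ∀ i, |TOc i| ≤ 1 / (1 - β))
    -- marginal active-time coefficients A_i^Ω
    (A : S → ℝ)
    (hA : ∀ i, A i = 1 + β * ∑' k, (p1 i k - p0 i k) * TOc k) :
    (∑' i, x1 i) + (∑' i : ↥Ωᶜ, A i * x0 i) =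
      TOc j0 + (∑' i : ↥Ω, A i * x1 i) := by
  set M : ℝ := 1 / (1 - β) with hMdef
  have hM1 : (0:ℝ) < 1 - β := by linarith
  have hMnn : 0 ≤ M := by positivity
  -- summability of the occupation measures
  have hxs : Summable (fun i => x1 i + x0 i) := hxsum.summable
  have hx1s : Summable x1 :=
    Summable.of_nonneg_of_le hx1nn (fun i => le_add_of_nonneg_right (hx0nn i)) hxs
  have hx0s : Summable x0 :=
    Summable.of_nonneg_of_le hx0nn (fun i => le_add_of_nonneg_left (hx1nn i)) hxs
  -- row sums and their bounds
  have hS1s : ∀ i, Summable (fun k => p1 i k * TOc k) := srow_summable hp1nn hp1 hTbd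
  have hS0s : ∀ i, Summable (fun k => p0 i k * TOc k) := srow_summable hp0nn hp0 hTbd
  have hS1bd : ∀ i, |Srow p1 TOc i| ≤ M := srow_bound hp1nn hp1 hTbd
  have hS0bd : ∀ i, |Srow p0 TOc i| ≤ M := srow_bound hp0nn hp0 hTbd
  -- A in terms of row sums
  have hA' : ∀ i, A i = 1 + β * (Srow p1 TOc i - Srow p0 TOc i) := by
    intro i
    rw [hA i]
    congr 1
    congr 1
    rw [show (∑' k, (p1 i k - p0 i k) * TOc k)
        = ∑' k, (p1 i k * TOc k - p0 i k * TOc k) from tsum_congr fun k => sub_mul _ _ _]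
    exact Summable.tsum_sub (hS1s i) (hS0s i)
  -- bound on A
  have hAbd : ∀ i, |A i| ≤ 1 + β * (M + M) := by
    intro i
    calc |A i| = |1 + β * (Srow p1 TOc i - Srow p0 TOc i)| := by rw [hA' i]
      _ ≤ |1| + |β * (Srow p1 TOc i - Srow p0 TOc i)| := abs_add_le _ _
      _ = 1 + β * |Srow p1 TOc i - Srow p0 TOc i| := by
          rw [abs_one, abs_mul, abs_of_nonneg hβ0]
      _ ≤ 1 + β * (M + M) := by
          have h := (abs_sub (Srow p1 TOc i) (Srow p0 TOc i)).trans
            (add_le_add (hS1bd i) (hS0bd i))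
          have h' := mul_le_mul_of_nonneg_left h hβ0; linarith
  -- the two swap identities
  have hswap1 := swapKey p1 x1 TOc M hp1nn hp1 hx1nn hx1s hTbd
  have hswap0 := swapKey p0 x0 TOc M hp0nn hp0 hx0nn hx0s hTbd
  -- balance equation multiplied by TOc and summed
  have hbal' : ∀ i, TOc i * (x1 i + x0 i)
      = (if i = j0 then TOc j0 else 0) + β * (TOc i * ∑' j, p1 j i * x1 j)
        + β * (TOc i * ∑' j, p0 j i * x0 j) := by
    intro i
    rw [hbal i]
    split_ifs with h
    · subst h; ring
    · ring
  have hδ : HasSum (fun i => if i = j0 then TOc j0 else 0) (TOc j0) :=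
    hasSum_ite_eq j0 (TOc j0)
  have hTx : HasSum (fun i => TOc i * (x1 i + x0 i))
      (TOc j0 + β * ∑' j, x1 j * Srow p1 TOc j + β * ∑' j, x0 j * Srow p0 TOc j) := by
    have h := (hδ.add (hswap1.mul_left β)).add (hswap0.mul_left β)
    have hfe : (fun i => ((if i = j0 then TOc j0 else 0)
        + β * (TOc i * ∑' j, p1 j i * x1 j)) + β * (TOc i * ∑' j, p0 j i * x0 j))
        = fun i => TOc i * (x1 i + x0 i) := funext fun i => by rw [hbal' i]
    rw [hfe] at h
    exact h
  -- summability of x·S terms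
  have hx1S1 : Summable (fun i => x1 i * Srow p1 TOc i) := by
    refine Summable.of_abs (Summable.of_nonneg_of_le (fun _ => abs_nonneg _) (fun i => ?_)
      (hx1s.mul_right M))
    rw [abs_mul, abs_of_nonneg (hx1nn i)]
    exact mul_le_mul_of_nonneg_left (hS1bd i) (hx1nn i)
  have hx0S0 : Summable (fun i => x0 i * Srow p0 TOc i) := by
    refine Summable.of_abs (Summable.of_nonneg_of_le (fun _ => abs_nonneg _) (fun i => ?_)
      (hx0s.mul_right M))
    rw [abs_mul, abs_of_nonneg (hx0nn i)]
    exact mul_le_mul_of_nonneg_left (hS0bd i) (hx0nn i)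
  -- summability of the indicator sums
  have hg1s : Summable (Ω.indicator (fun i => A i * x1 i)) := by
    refine Summable.of_abs (Summable.of_nonneg_of_le (fun _ => abs_nonneg _) (fun i => ?_)
      (hx1s.mul_left (1 + β * (M + M))))
    by_cases hi : i ∈ Ω
    · rw [Set.indicator_of_mem hi, abs_mul, abs_of_nonneg (hx1nn i)]
      exact mul_le_mul_of_nonneg_right (hAbd i) (hx1nn i)
    · rw [Set.indicator_of_notMem hi, abs_zero]
      have : (0:ℝ) ≤ 1 + β * (M + M) := by positivity
      exact mul_nonneg this (hx1nn i)
  have hg0s : Summable (Ωᶜ.indicator (fun i => A i * x0 i)) := by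
    refine Summable.of_abs (Summable.of_nonneg_of_le (fun _ => abs_nonneg _) (fun i => ?_)
      (hx0s.mul_left (1 + β * (M + M))))
    by_cases hi : i ∈ Ωᶜ
    · rw [Set.indicator_of_mem hi, abs_mul, abs_of_nonneg (hx0nn i)]
      exact mul_le_mul_of_nonneg_right (hAbd i) (hx0nn i)
    · rw [Set.indicator_of_notMem hi, abs_zero]
      have : (0:ℝ) ≤ 1 + β * (M + M) := by positivity
      exact mul_nonneg this (hx0nn i)
  -- the pointwise decomposition identity
  have hstar : ∀ i, Ω.indicator (fun i => A i * x1 i) i - Ωᶜ.indicator (fun i => A i * x0 i) i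
      + TOc i * (x1 i + x0 i) - x1 i
      = β * (x1 i * Srow p1 TOc i) + β * (x0 i * Srow p0 TOc i) := by
    intro i
    by_cases hi : i ∈ Ω
    · have hic : i ∉ Ωᶜ := fun h => h hi
      rw [Set.indicator_of_mem hi, Set.indicator_of_notMem hic, hA' i]
      have h0 : TOc i = β * Srow p0 TOc i := hTdp0 i hi
      rw [h0]; ring
    · have hic : i ∈ Ωᶜ := hi
      rw [Set.indicator_of_notMem hi, Set.indicator_of_mem hic, hA' i]
      have h1 : TOc i = 1 + β * Srow p1 TOc i := hTdp1 i hic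
      rw [h1]; ring
  -- combine
  have hR' : HasSum (fun i => β * (x1 i * Srow p1 TOc i) + β * (x0 i * Srow p0 TOc i))
      (β * ∑' j, x1 j * Srow p1 TOc j + β * ∑' j, x0 j * Srow p0 TOc j) :=
    (hx1S1.hasSum.mul_left β).add (hx0S0.hasSum.mul_left β)
  have hL : HasSum (fun i => Ω.indicator (fun i => A i * x1 i) i
      - Ωᶜ.indicator (fun i => A i * x0 i) i + TOc i * (x1 i + x0 i) - x1 i)
      ((∑' i, Ω.indicator (fun i => A i * x1 i) i)
        - (∑' i, Ωᶜ.indicator (fun i => A i * x0 i) i)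
        + (TOc j0 + β * ∑' j, x1 j * Srow p1 TOc j + β * ∑' j, x0 j * Srow p0 TOc j)
        - ∑' i, x1 i) :=
    ((hg1s.hasSum.sub hg0s.hasSum).add hTx).sub hx1s.hasSum
  have hfe : (fun i => Ω.indicator (fun i => A i * x1 i) i
      - Ωᶜ.indicator (fun i => A i * x0 i) i + TOc i * (x1 i + x0 i) - x1 i)
      = fun i => β * (x1 i * Srow p1 TOc i) + β * (x0 i * Srow p0 TOc i) :=
    funext hstar
  rw [hfe] at hL
  have hkey := hL.unique hR'
  rw [tsum_subtype Ωᶜ (fun i => A i * x0 i), tsum_subtype Ω (fun i => A i * x1 i)]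
  linarith [hkey]
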